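/- Let n be a positive integer with r(n) = s and m(n) = t. If c(n) ≤ s(t−1) + 1, then y(n) = 2^{c(n)−t} − n^{t−1} < 0. -/
import Mathlib


theorem stmt
    (z : ℕ → ℤ) (m r : ℕ → ℕ) (c x : ℕ → ℤ) (y : ℕ → ℚ)
    (hz : ∀ n : ℕ, 1 ≤ n → 3 * z n < 2 * (n : ℤ) ∧ ∀ w : ℤ, 3 * w < 2 * (n : ℤ) → w ≤ z n)
    (hm : ∀ n : ℕ, 1 ≤ n → (m n : ℤ) ^ 2 ≤ 2 * (n : ℤ) ∧ ∀ w : ℕ, (w : ℤ) ^ 2 ≤ 2 * (n : ℤ) → w ≤ m n)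
    (hr : ∀ n : ℕ, 1 ≤ n → n ≤ 2 ^ r n ∧ ∀ s : ℕ, n ≤ 2 ^ s → r n ≤ s)
    (hc : ∀ n : ℕ, c n = 2 * (n : ℤ) - 2 * z n + 2)
    (hx : ∀ n : ℕ, x n = z n - ((r n : ℤ) + 1) * (m n : ℤ))
    (hy : ∀ n : ℕ, y n = (2 : ℚ) ^ (c n - (m n : ℤ)) - (n : ℚ) ^ ((m n : ℤ) - 1)) :
    ∀ n : ℕ, 1 ≤ n → c n ≤ (r n : ℤ) * ((m n : ℤ) - 1) + 1 → y n < 0 := by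
  intro n hn hcle
  rcases eq_or_lt_of_le hn with h1 | h2
  · -- n = 1 : hypothesis hcle is contradictory
    exfalso
    have hn1 : n = 1 := h1.symm
    subst hn1
    have hz1 : z 1 ≤ 0 := by have := (hz 1 le_rfl).1; omega
    have hr1 : r 1 = 0 := Nat.le_zero.mp ((hr 1 le_rfl).2 0 (by norm_num))
    have hc1 : (4 : ℤ) ≤ c 1 := by rw [hc 1]; push_cast; omega
    rw [hr1] at hcle
    push_cast at hcle
    omega
  · -- n ≥ 2
    have hm2 : 2 ≤ m n := by
      have := (hm n hn).2 2 (by push_cast; nlinarith [h2])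
      exact_mod_cast this
    have hr1 : 1 ≤ r n := by
      by_contra h
      have h0 : r n = 0 := by omega
      have hle := (hr n hn).1
      rw [h0] at hle
      simp at hle
      omega
    have hnbig : 2 ^ (r n - 1) < n := by
      by_contra h
      push_neg at h
      have := (hr n hn).2 (r n - 1) h
      omega
    -- key integer exponent inequality
    have hexp : c n - (m n : ℤ) ≤ (((r n - 1) * (m n - 1) : ℕ) : ℤ) := by
      have : (((r n - 1) * (m n - 1) : ℕ) : ℤ) = ((r n : ℤ) - 1) * ((m n : ℤ) - 1) := by
        push_cast [Nat.cast_sub hr1, Nat.cast_sub (by omega : 1 ≤ m n)]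
        ring
      rw [this]
      nlinarith [hcle]
    rw [hy n]
    have h1 : (2 : ℚ) ^ (c n - (m n : ℤ)) ≤ (2 : ℚ) ^ (((r n - 1) * (m n - 1) : ℕ) : ℤ) :=
      zpow_le_zpow_right₀ one_le_two hexp
    have h2' : (2 : ℚ) ^ (((r n - 1) * (m n - 1) : ℕ) : ℤ) < (n : ℚ) ^ ((m n : ℤ) - 1) := by
      have hmeq : ((m n : ℤ) - 1) = ((m n - 1 : ℕ) : ℤ) := by
        push_cast [Nat.cast_sub (by omega : 1 ≤ m n)]; ring
      rw [hmeq, zpow_natCast, zpow_natCast]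
      have hnat : 2 ^ ((r n - 1) * (m n - 1)) < n ^ (m n - 1) := by
        rw [pow_mul]
        exact Nat.pow_lt_pow_left hnbig (by omega)
      exact_mod_cast hnat
    linarith
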